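/- For all positive integers r and n with r odd: if n is even then L_{3r} * (∑_{k=1}^n L_{2rk}^3) = 5 * F_{rn} * F_{rn+r} * (L_{rn} * L_{rn+r} * L_{2rn+r} + 4*(L_{2r} + 1)), and if n is odd then L_{3r} * (∑_{k=1}^n L_{2rk}^3) = L_{rn} * L_{rn+r} * (5 * F_{rn} * F_{rn+r} * L_{2rn+r} + 4*(L_{2r} + 1)). -/

import Mathlib

open Finset

def L : ℕ → ℤ
  | 0 => 2
  | 1 => 1
  | n + 2 => L (n + 1) + L n

def F (n : ℕ) : ℤ := Nat.fib n

lemma Lrec (n : ℕ) : L (n + 2) = L (n + 1) + L n := rfl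

lemma Frec (n : ℕ) : F (n + 2) = F (n + 1) + F n := by
  unfold F; rw [Nat.fib_add_two]; push_cast; ring

lemma stepQ (m : ℕ) : ((L (m + 1) : ℤ) : ℚ) = ((L m : ℚ) + 5 * (F m : ℚ)) / 2 ∧
    ((F (m + 1) : ℤ) : ℚ) = ((F m : ℚ) + (L m : ℚ)) / 2 := by
  induction m with
  | zero => norm_num [L, F]
  | succ n ih =>
    obtain ⟨h1, h2⟩ := ih
    constructor
    · have e : L (n + 1 + 1) = L (n + 1) + L n := Lrec n
      rw [e]; push_cast; rw [h1, h2]; ring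
    · have e : F (n + 1 + 1) = F (n + 1) + F n := Frec n
      rw [e]; push_cast; rw [h1, h2]; ring

lemma LQ_add (m n : ℕ) : ((L (m + n) : ℤ) : ℚ) =
    ((L m : ℚ) * (L n : ℚ) + 5 * (F m : ℚ) * (F n : ℚ)) / 2 := by
  induction n using Nat.twoStepInduction with
  | zero => norm_num [L, F]
  | one => simpa [L, F] using (stepQ m).1
  | more n ih1 ih2 =>
    have e : L (m + n + 2) = L (m + n + 1) + L (m + n) := Lrec (m + n)
    have e2 : L (n + 2) = L (n + 1) + L n := Lrec n
    have e3 : F (n + 2) = F (n + 1) + F n := Frec n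
    have e4 : m + (n + 1) = m + n + 1 := by omega
    rw [show m + (n + 2) = m + n + 2 from by omega, e, e2, e3]
    rw [e4] at ih2
    push_cast
    rw [ih2, ih1]; ring

lemma FQ_add (m n : ℕ) : ((F (m + n) : ℤ) : ℚ) =
    ((F m : ℚ) * (L n : ℚ) + (F n : ℚ) * (L m : ℚ)) / 2 := by
  induction n using Nat.twoStepInduction with
  | zero => norm_num [L, F]
  | one => simpa [L, F] using (stepQ m).2
  | more n ih1 ih2 =>
    have e : F (m + n + 2) = F (m + n + 1) + F (m + n) := Frec (m + n)
    have e2 : L (n + 2) = L (n + 1) + L n := Lrec n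
    have e3 : F (n + 2) = F (n + 1) + F n := Frec n
    have e4 : m + (n + 1) = m + n + 1 := by omega
    rw [show m + (n + 2) = m + n + 2 from by omega, e, e2, e3]
    rw [e4] at ih2
    push_cast
    rw [ih2, ih1]; ring

lemma sqQ (n : ℕ) : ((L n : ℤ) : ℚ) ^ 2 - 5 * ((F n : ℤ) : ℚ) ^ 2 = 4 * (-1 : ℚ) ^ n := by
  induction n with
  | zero => norm_num [L, F]
  | succ n ih =>
    obtain ⟨h1, h2⟩ := stepQ n
    rw [h1, h2, pow_succ]
    linear_combination (-1 : ℚ) * ih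

lemma sq_odd {n : ℕ} (h : Odd n) : ((L n : ℤ) : ℚ) ^ 2 - 5 * ((F n : ℤ) : ℚ) ^ 2 = -4 := by
  rw [sqQ n, Odd.neg_one_pow h]; ring

lemma sq_even {n : ℕ} (h : Even n) : ((L n : ℤ) : ℚ) ^ 2 - 5 * ((F n : ℤ) : ℚ) ^ 2 = 4 := by
  rw [sqQ n, Even.neg_one_pow h]; ring

lemma key0 (u v F2d L2d L3d : ℚ)
    (sqd : v ^ 2 - 5 * u ^ 2 = -4)
    (hL2d : L2d = (v * v + 5 * u * u) / 2)
    (hF2d : F2d = (u * v + u * v) / 2)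
    (hL3d : L3d = (L2d * v + 5 * F2d * u) / 2) :
    L3d * L2d ^ 3 = v * L2d * (5 * u * F2d * L3d + 4 * (L2d + 1)) := by
  subst hL2d hF2d hL3d
  linear_combination (-(1 : ℚ)) * ((375/32) * u^6 * v + (25/32) * u^4 * v^3 + (75/8) * u^4 * v + (-15/32) * u^2 * v^5 + (5/2) * u^2 * v^3 + (5/2) * u^2 * v + (-1/32) * v^7 + (1/8) * v^5 + (1/2) * v^3) * sqd

lemma key1 (x y u v Fad Lad Fa2d La2d L2ad L2a2d L2a3d L2d F2d L3d : ℚ)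
    (sqa : y ^ 2 - 5 * x ^ 2 = 4) (sqd : v ^ 2 - 5 * u ^ 2 = -4)
    (hFad : Fad = (x * v + u * y) / 2)
    (hLad : Lad = (y * v + 5 * x * u) / 2)
    (hFa2d : Fa2d = (Fad * v + u * Lad) / 2)
    (hLa2d : La2d = (Lad * v + 5 * Fad * u) / 2)
    (hL2ad : L2ad = (y * Lad + 5 * x * Fad) / 2)
    (hL2a2d : L2a2d = (Lad * Lad + 5 * Fad * Fad) / 2)
    (hL2a3d : L2a3d = (Lad * La2d + 5 * Fad * Fa2d) / 2)
    (hL2d : L2d = (v * v + 5 * u * u) / 2)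
    (hF2d : F2d = (u * v + u * v) / 2)
    (hL3d : L3d = (L2d * v + 5 * F2d * u) / 2) :
    Lad * La2d * (5 * Fad * Fa2d * L2a3d + 4 * (L2d + 1)) =
      5 * x * Fad * (y * Lad * L2ad + 4 * (L2d + 1)) + L3d * L2a2d ^ 3 := by
  subst hFad hLad hFa2d hLa2d hL2ad hL2a2d hL2a3d hF2d hL2d hL3d
  linear_combination ((234375/2048) * x^4 * u^8 * v + (-53125/1024) * x^4 * u^6 * v^3 + (3125/512) * x^4 * u^4 * v^5 + (125/1024) * x^4 * u^2 * v^7 + (-375/8) * x^4 * u^2 * v + (-75/2048) * x^4 * v^9 + (-25/8) * x^4 * v^3 + (15625/512) * x^3 * y * u^9 + (15625/1024) * x^3 * y * u^7 * v^2 + (-11875/1024) * x^3 * y * u^5 * v^4 + (1875/1024) * x^3 * y * u^3 * v^6 + (-125/8) * x^3 * y * u^3 + (-75/1024) * x^3 * y * u * v^8 + (-125/16) * x^3 * y * u * v^2 + (9375/1024) * x^2 * y^2 * u^8 * v + (-625/128) * x^2 * y^2 * u^6 * v^3 + (375/512) * x^2 * y^2 * u^4 * v^5 + (-75/16) * x^2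 * y^2 * u^2 * v + (-5/1024) * x^2 * y^2 * v^9 + (-5/16) * x^2 * y^2 * v^3 + (9375/512) * x^2 * u^8 * v + (-4375/256) * x^2 * u^6 * v^3 + (125/32) * x^2 * u^4 * v^5 + (-25/256) * x^2 * u^2 * v^7 + (-75/4) * x^2 * u^2 * v + (-15/512) * x^2 * v^9 + (-5/4) * x^2 * v^3 + (-3125/1024) * x * y^3 * u^7 * v^2 + (875/1024) * x * y^3 * u^5 * v^4 + (25/1024) * x * y^3 * u^3 * v^6 + (-15/1024) * x * y^3 * u * v^8 + (-5/16) * x * y^3 * u * v^2 + (-3125/256) * x * y * u^7 * v^2 + (875/256) * x * y * u^5 * v^4 + (25/256) * x * y * u^3 * v^6 + (-15/256) * x * y * u * v^8 + (-5/4) * x * y * u * v^2 + (-1875/2048) * y^4 * u^8 * v + (125/1024) * y^4 * u^6 * v^3 + (25/512) * y^4 * u^4 * v^5 + (-5/1024) * y^4 * u^2 * v^7 + (-1/2048) * y^4 * v^9 + (-1875/512) * y^2 * u^8 * v + (125/256) * y^2 * u^6 * v^3 + (25/128) * y^2 * u^4 * v^5 + (-5/256) * y^2 * u^2 * v^7 +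 (-1/512) * y^2 * v^9 + (-1875/128) * u^8 * v + (125/64) * u^6 * v^3 + (25/32) * u^4 * v^5 + (25/4) * u^4 * v + (-5/64) * u^2 * v^7 + (5/2) * u^2 * v^3 + (5/2) * u^2 * v + (-1/128) * v^9 + (1/4) * v^5 + (1/2) * v^3) * sqa + ((-46875/512) * x^6 * u^6 * v + (15625/512) * x^6 * u^4 * v^3 + (-9375/128) * x^6 * u^4 * v + (-625/512) * x^6 * u^2 * v^5 + (625/64) * x^6 * u^2 * v^3 + (-1875/32) * x^6 * u^2 * v + (-125/512) * x^6 * v^7 + (125/128) * x^6 * v^5 + (-125/32) * x^6 * v^3 + (-15625/512) * x^5 * y * u^7 + (-3125/512) * x^5 * y * u^5 * v^2 + (-3125/128) * x^5 * y * u^5 + (3125/512) * x^5 * y * u^3 * v^4 + (-625/64) * x^5 * y * u^3 * v^2 + (-625/32) * x^5 * y * u^3 + (-375/512) * x^5 * y * u * v^6 + (375/128) * x^5 * y * u * v^4 + (-375/32) * x^5 * y * u * v^2 + (-28125/256) * x^4 * u^6 * v + (9375/256) * x^4 * u^4 * v^3 + (-5625/64) * x^4 * u^4 * v + (-375/256)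 * x^4 * u^2 * v^5 + (375/32) * x^4 * u^2 * v^3 + (-1125/16) * x^4 * u^2 * v + (-75/256) * x^4 * v^7 + (75/64) * x^4 * v^5 + (-75/16) * x^4 * v^3 + (-3125/128) * x^3 * y * u^7 + (-625/128) * x^3 * y * u^5 * v^2 + (-625/32) * x^3 * y * u^5 + (625/128) * x^3 * y * u^3 * v^4 + (-125/16) * x^3 * y * u^3 * v^2 + (-125/8) * x^3 * y * u^3 + (-75/128) * x^3 * y * u * v^6 + (75/32) * x^3 * y * u * v^4 + (-75/8) * x^3 * y * u * v^2 + (375/32) * x^2 * u^4 * v^3 + (-25/16) * x^2 * u^2 * v^5 + (75/8) * x^2 * u^2 * v^3 + (-75/4) * x^2 * u^2 * v + (-5/32) * x^2 * v^7 + (5/8) * x^2 * v^5 + (-5/4) * x^2 * v^3 + (-5/2) * x^2 * v + (625/64) * x * y * u^5 * v^2 + (-25/32) * x * y * u^3 * v^4 + (125/16) * x * y * u^3 * v^2 + (-25/4) * x * y * u^3 + (-15/64) * x * y * u * v^6 + (15/16) * x * y * u * v^4 + (-5/2) * x * y * u + (375/32) * u^6 * v + (25/32) * u^4 * v^3 +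 (75/8) * u^4 * v + (-15/32) * u^2 * v^5 + (5/2) * u^2 * v^3 + (5/2) * u^2 * v + (-1/32) * v^7 + (1/8) * v^5 + (1/2) * v^3) * sqd

lemma key2 (x y u v Fad Lad Fa2d La2d L2ad L2a2d L2a3d L2d F2d L3d : ℚ)
    (sqa : y ^ 2 - 5 * x ^ 2 = -4) (sqd : v ^ 2 - 5 * u ^ 2 = -4)
    (hFad : Fad = (x * v + u * y) / 2)
    (hLad : Lad = (y * v + 5 * x * u) / 2)
    (hFa2d : Fa2d = (Fad * v + u * Lad) / 2)
    (hLa2d : La2d = (Lad * v + 5 * Fad * u) / 2)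
    (hL2ad : L2ad = (y * Lad + 5 * x * Fad) / 2)
    (hL2a2d : L2a2d = (Lad * Lad + 5 * Fad * Fad) / 2)
    (hL2a3d : L2a3d = (Lad * La2d + 5 * Fad * Fa2d) / 2)
    (hL2d : L2d = (v * v + 5 * u * u) / 2)
    (hF2d : F2d = (u * v + u * v) / 2)
    (hL3d : L3d = (L2d * v + 5 * F2d * u) / 2) :
    5 * Fad * Fa2d * (Lad * La2d * L2a3d + 4 * (L2d + 1)) =
      y * Lad * (5 * x * Fad * L2ad + 4 * (L2d + 1)) + L3d * L2a2d ^ 3 := by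
  subst hFad hLad hFa2d hLa2d hL2ad hL2a2d hL2a3d hF2d hL2d hL3d
  linear_combination ((234375/2048) * x^4 * u^8 * v + (-53125/1024) * x^4 * u^6 * v^3 + (3125/512) * x^4 * u^4 * v^5 + (125/1024) * x^4 * u^2 * v^7 + (-375/8) * x^4 * u^2 * v + (-75/2048) * x^4 * v^9 + (-25/8) * x^4 * v^3 + (15625/512) * x^3 * y * u^9 + (15625/1024) * x^3 * y * u^7 * v^2 + (-11875/1024) * x^3 * y * u^5 * v^4 + (1875/1024) * x^3 * y * u^3 * v^6 + (-125/8) * x^3 * y * u^3 + (-75/1024) * x^3 * y * u * v^8 + (-125/16) * x^3 * y * u * v^2 + (9375/1024) * x^2 * y^2 * u^8 * v + (-625/128) * x^2 * y^2 * u^6 * v^3 + (375/512) * x^2 * y^2 * u^4 * v^5 + (-75/16) * x^2 * y^2 * u^2 * v + (-5/1024) * x^2 * y^2 * v^9 + (-5/16) * x^2 * y^2 * v^3 + (-9375/512) * x^2 * u^8 * v + (4375/256) * x^2 * u^6 * v^3 + (-125/32) * x^2 * u^4 * v^5 + (25/256) * x^2 * u^2 * v^7 + (75/4) * x^2 * u^2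 * v + (15/512) * x^2 * v^9 + (5/4) * x^2 * v^3 + (-3125/1024) * x * y^3 * u^7 * v^2 + (875/1024) * x * y^3 * u^5 * v^4 + (25/1024) * x * y^3 * u^3 * v^6 + (-15/1024) * x * y^3 * u * v^8 + (-5/16) * x * y^3 * u * v^2 + (3125/256) * x * y * u^7 * v^2 + (-875/256) * x * y * u^5 * v^4 + (-25/256) * x * y * u^3 * v^6 + (15/256) * x * y * u * v^8 + (5/4) * x * y * u * v^2 + (-1875/2048) * y^4 * u^8 * v + (125/1024) * y^4 * u^6 * v^3 + (25/512) * y^4 * u^4 * v^5 + (-5/1024) * y^4 * u^2 * v^7 + (-1/2048) * y^4 * v^9 + (1875/512) * y^2 * u^8 * v + (-125/256) * y^2 * u^6 * v^3 + (-25/128) * y^2 * u^4 * v^5 + (5/256) * y^2 * u^2 * v^7 + (1/512) * y^2 * v^9 + (-1875/128) * u^8 * v + (125/64) * u^6 * v^3 + (25/32) * u^4 * v^5 + (25/2) * u^4 * v + (-5/64) * u^2 * v^7 + (5/2) * u^2 * v^3 + (-1/128) * v^9 + (-1) * v^3 + (-2) * v) * sqa + ((-46875/512) * x^6 * u^6 *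 v + (15625/512) * x^6 * u^4 * v^3 + (-9375/128) * x^6 * u^4 * v + (-625/512) * x^6 * u^2 * v^5 + (625/64) * x^6 * u^2 * v^3 + (-1875/32) * x^6 * u^2 * v + (-125/512) * x^6 * v^7 + (125/128) * x^6 * v^5 + (-125/32) * x^6 * v^3 + (-15625/512) * x^5 * y * u^7 + (-3125/512) * x^5 * y * u^5 * v^2 + (-3125/128) * x^5 * y * u^5 + (3125/512) * x^5 * y * u^3 * v^4 + (-625/64) * x^5 * y * u^3 * v^2 + (-625/32) * x^5 * y * u^3 + (-375/512) * x^5 * y * u * v^6 + (375/128) * x^5 * y * u * v^4 + (-375/32) * x^5 * y * u * v^2 + (28125/256) * x^4 * u^6 * v + (-9375/256) * x^4 * u^4 * v^3 + (5625/64) * x^4 * u^4 * v + (375/256) * x^4 * u^2 * v^5 + (-375/32) * x^4 * u^2 * v^3 + (1125/16) * x^4 * u^2 * v + (75/256) * x^4 * v^7 + (-75/64) * x^4 * v^5 + (75/16) * x^4 * v^3 + (3125/128) * x^3 * y * u^7 + (625/128) * x^3 * y * u^5 * v^2 + (625/32) * x^3 * y * u^5 + (-625/128) * x^3 * y * u^3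 * v^4 + (125/16) * x^3 * y * u^3 * v^2 + (125/8) * x^3 * y * u^3 + (75/128) * x^3 * y * u * v^6 + (-75/32) * x^3 * y * u * v^4 + (75/8) * x^3 * y * u * v^2 + (375/32) * x^2 * u^4 * v^3 + (-25/16) * x^2 * u^2 * v^5 + (75/8) * x^2 * u^2 * v^3 + (-75/4) * x^2 * u^2 * v + (-5/32) * x^2 * v^7 + (5/8) * x^2 * v^5 + (-5/4) * x^2 * v^3 + (-5/2) * x^2 * v + (625/64) * x * y * u^5 * v^2 + (-25/32) * x * y * u^3 * v^4 + (125/16) * x * y * u^3 * v^2 + (-25/4) * x * y * u^3 + (-15/64) * x * y * u * v^6 + (15/16) * x * y * u * v^4 + (-5/2) * x * y * u + (-375/32) * u^6 * v + (-25/32) * u^4 * v^3 + (-75/8) * u^4 * v + (15/32) * u^2 * v^5 + (-5/2) * u^2 * v^3 + (5/2) * u^2 * v + (1/32) * v^7 + (-1/8) * v^5 + (1/2) * v^3 + (2) * v) * sqd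

theorem stmt16 (r n : ℕ) (hr : 0 < r) (hn : 0 < n) (hro : Odd r) :
    (Even n → L (3 * r) * ∑ k ∈ Finset.Icc 1 n, L (2 * r * k) ^ 3 =
      5 * F (r * n) * F (r * n + r) * (L (r * n) * L (r * n + r) * L (2 * r * n + r) + 4 * (L (2 * r) + 1))) ∧
    (Odd n → L (3 * r) * ∑ k ∈ Finset.Icc 1 n, L (2 * r * k) ^ 3 =
      L (r * n) * L (r * n + r) * (5 * F (r * n) * F (r * n + r) * L (2 * r * n + r) + 4 * (L (2 * r) + 1))) := by
  induction n, hn using Nat.le_induction with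
  | base =>
    constructor
    · intro h; exact absurd h (by decide)
    · intro _
      rw [show Nat.succ 0 = 1 from rfl]
      rw [show Finset.Icc 1 1 = {1} from rfl, Finset.sum_singleton]
      rw [show (2 : ℕ) * r * 1 + r = r + r + r from by ring,
        show (2 : ℕ) * r * 1 = r + r from by ring,
        show r * 1 = r from by ring,
        show (3 : ℕ) * r = r + r + r from by ring,
        show (2 : ℕ) * r = r + r from by ring]
      qify
      linear_combination key0 (F r : ℚ) (L r : ℚ) _ _ _ (sq_odd hro) (LQ_add r r) (FQ_add r r)
        (LQ_add (r + r) r)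
  | succ n hn1 ih =>
    obtain ⟨ihE, ihO⟩ := ih
    have hsum : Finset.Icc 1 (n + 1) = insert (n + 1) (Finset.Icc 1 n) :=
      (Finset.insert_Icc_right_eq_Icc_add_one (by omega)).symm
    have hnotmem : n + 1 ∉ Finset.Icc 1 n := by simp
    have hrw : ∀ (G : ℤ), G * ∑ k ∈ Finset.Icc 1 (n + 1), L (2 * r * k) ^ 3 =
        G * ∑ k ∈ Finset.Icc 1 n, L (2 * r * k) ^ 3 + G * L (2 * r * (n + 1)) ^ 3 := by
      intro G
      rw [hsum, Finset.sum_insert hnotmem]; ring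
    have e1 : r * (n + 1) = r * n + r := by ring
    have e2 : r * (n + 1) + r = r * n + r + r := by ring
    have e3 : 2 * r * (n + 1) + r = (r * n + r) + (r * n + r + r) := by ring
    have e4 : 2 * r * (n + 1) = (r * n + r) + (r * n + r) := by ring
    have e5 : 2 * r * n + r = r * n + (r * n + r) := by ring
    have e6 : (2 : ℕ) * r = r + r := by ring
    have e7 : (3 : ℕ) * r = (r + r) + r := by ring
    constructor
    · -- Even (n + 1), so n is odd
      intro hev
      have hno : Odd n := Nat.not_even_iff_odd.mp (Nat.even_add_one.mp hev)
      have ha : Odd (r * n) := hro.mul hno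
      have hS := ihO hno
      rw [hrw, e3, e4, e2, e1, e6, e7]
      rw [e5, e6, e7] at hS
      qify at hS ⊢
      have hkey := key2 (F (r * n) : ℚ) (L (r * n) : ℚ) (F r : ℚ) (L r : ℚ)
        _ _ _ _ _ _ _ _ _ _ (sq_odd ha) (sq_odd hro)
        (FQ_add (r * n) r) (LQ_add (r * n) r)
        (FQ_add (r * n + r) r) (LQ_add (r * n + r) r)
        (LQ_add (r * n) (r * n + r)) (LQ_add (r * n + r) (r * n + r))
        (LQ_add (r * n + r) (r * n + r + r)) (LQ_add r r) (FQ_add r r)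
        (LQ_add (r + r) r)
      linear_combination hS - hkey
    · -- Odd (n + 1), so n is even
      intro hod
      have hne : Even n := Nat.not_odd_iff_even.mp (Nat.odd_add_one.mp hod)
      have ha : Even (r * n) := hne.mul_left r
      have hS := ihE hne
      rw [hrw, e3, e4, e2, e1, e6, e7]
      rw [e5, e6, e7] at hS
      qify at hS ⊢
      have hkey := key1 (F (r * n) : ℚ) (L (r * n) : ℚ) (F r : ℚ) (L r : ℚ)
        _ _ _ _ _ _ _ _ _ _ (sq_even ha) (sq_odd hro)
        (FQ_add (r * n) r) (LQ_add (r * n) r)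
        (FQ_add (r * n + r) r) (LQ_add (r * n + r) r)
        (LQ_add (r * n) (r * n + r)) (LQ_add (r * n + r) (r * n + r))
        (LQ_add (r * n + r) (r * n + r + r)) (LQ_add r r) (FQ_add r r)
        (LQ_add (r + r) r)
      linear_combination hS - hkey
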